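/- arXiv:0902.2853 — 4 statements merged into one kernel-verified Lean document; each statement's English description precedes it below -/
import Mathlib

section
/- Let K be a field of characteristic zero, K[[x]]⁺ := {μ ∈ K[[x]] : ν(μ) > 0} and 𝔐⁺ := {σ ∈ K[[x]] : ν(σ) > 1}. Then K[[x]]⁺ × 𝔐⁺ is a two-sided ideal of the Riordan near algebra: it is a K-subspace of K[[x]] × 𝔐, and for every (μ,σ) ∈ K[[x]] × 𝔐 and every (μ₊,σ₊) ∈ K[[x]]⁺ × 𝔐⁺, both (μ,σ) ⋊ (μ₊,σ₊) and (μ₊,σ₊) ⋊ (μ,σ) belong to K[[x]]⁺ × 𝔐⁺. -/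
/-!
Common setting: `K[[x]]` is `PowerSeries K` for a field `K` of characteristic zero.
`PowerSeries.order` (valued in `ℕ∞ = WithTop ℕ`) is the order/valuation `ν`; note that
multiplication and powers on `ℕ∞` obey exactly the conventions of the paper
(`⊤ * n = ⊤` for `n ≠ 0`, `⊤ * 0 = 0`, `⊤ ^ n = ⊤` for `n ≥ 1`, `m ^ 0 = 1`).
-/

noncomputable section

/-- Formal substitution `f ∘ σ = ∑_n f_n σ^n`, defined coefficientwise: the coefficient
of `x^k` is `∑_{n ≤ k} f_n ⟨σ^n, x^k⟩`.  When the constant term of `σ` is zero this is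
exactly the formal substitution (the omitted terms `n > k` contribute `0` since then
`coeff k (σ^n) = 0`). -/
def pscomp {K : Type*} [Field K] (f σ : PowerSeries K) : PowerSeries K :=
  PowerSeries.mk fun k =>
    ∑ n ∈ Finset.range (k + 1), PowerSeries.coeff n f * PowerSeries.coeff k (σ ^ n)

/-- Compositional powers: `σ^{∘0} = x`, `σ^{∘(n+1)} = σ^{∘n} ∘ σ`. -/
def compPow {K : Type*} [Field K] (σ : PowerSeries K) : ℕ → PowerSeries K
  | 0 => PowerSeries.X
  | n + 1 => pscomp (compPow σ n) σ

/-- The Riordan near-algebra multiplication on `K[[x]] × 𝔐`: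
`(μ₁,σ₁) ⋊ (μ₂,σ₂) := ((μ₁ ∘ σ₂)·μ₂, σ₁ ∘ σ₂)`. -/
def rmul {K : Type*} [Field K] (p q : PowerSeries K × PowerSeries K) :
    PowerSeries K × PowerSeries K :=
  (pscomp p.1 q.2 * q.1, pscomp p.2 q.2)

/-- `⋊`-powers: `p^{⋊0} = (1, x)`, `p^{⋊(n+1)} = p^{⋊n} ⋊ p`. -/
def rpow {K : Type*} [Field K] (p : PowerSeries K × PowerSeries K) :
    ℕ → PowerSeries K × PowerSeries K
  | 0 => (1, PowerSeries.X)
  | n + 1 => rmul (rpow p n) p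

/-- The product (coefficientwise) topology on `K[[x]]`, the coefficient field `K`
carrying the discrete topology `⊥`. -/
def psTop (K : Type*) : TopologicalSpace (PowerSeries K) :=
  @Pi.topologicalSpace (Unit →₀ ℕ) (fun _ => K) (fun _ => ⊥)


open PowerSeries in
lemma lt_order_iff' {K : Type*} [Field K] (f : PowerSeries K) (n : ℕ) :
    (n : ℕ∞) < f.order ↔ ∀ i ≤ n, PowerSeries.coeff i f = 0 := by
  constructor
  · intro h i hi
    exact PowerSeries.coeff_of_lt_order i (lt_of_le_of_lt (by exact_mod_cast hi) h)
  · intro h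
    have := PowerSeries.nat_le_order f (n + 1) (fun i hi => h i (Nat.lt_succ_iff.mp hi))
    calc (n : ℕ∞) < ((n + 1 : ℕ) : ℕ∞) := by exact_mod_cast Nat.lt_succ_self n
    _ ≤ f.order := this

lemma coeff_zero_pscomp {K : Type*} [Field K] (f σ : PowerSeries K) :
    PowerSeries.coeff 0 (pscomp f σ) = PowerSeries.coeff 0 f := by
  simp [pscomp]

lemma coeff_one_pscomp {K : Type*} [Field K] (f σ : PowerSeries K) :
    PowerSeries.coeff 1 (pscomp f σ) =
      PowerSeries.coeff 1 f * PowerSeries.coeff 1 σ := by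
  simp [pscomp, Finset.sum_range_succ]

/-- `K[[x]]⁺ × 𝔐⁺` (pairs `(μ,σ)` with `ν(μ) > 0` and `ν(σ) > 1`) is a
two-sided ideal of the Riordan near algebra: it is a `K`-subspace of `K[[x]] × 𝔐`
(contains `(0,0)`, closed under `+` and scalar multiplication) and it absorbs `⋊` on
both sides. -/
theorem stmt_8 {K : Type*} [Field K] [CharZero K] :
    ((0 : ℕ∞) < (0 : PowerSeries K).order ∧ (1 : ℕ∞) < (0 : PowerSeries K).order) ∧
    (∀ p q : PowerSeries K × PowerSeries K,
      0 < p.1.order ∧ 1 < p.2.order → 0 < q.1.order ∧ 1 < q.2.order →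
      0 < (p + q).1.order ∧ 1 < (p + q).2.order) ∧
    (∀ (α : K) (p : PowerSeries K × PowerSeries K),
      0 < p.1.order ∧ 1 < p.2.order →
      0 < (α • p).1.order ∧ 1 < (α • p).2.order) ∧
    (∀ p q : PowerSeries K × PowerSeries K,
      PowerSeries.constantCoeff p.2 = 0 →
      0 < q.1.order ∧ 1 < q.2.order →
      (0 < (rmul p q).1.order ∧ 1 < (rmul p q).2.order) ∧
      (0 < (rmul q p).1.order ∧ 1 < (rmul q p).2.order)) := by
  have key : ∀ f : PowerSeries K, (0 : ℕ∞) < f.order ↔ PowerSeries.coeff 0 f = 0 := by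
    intro f
    rw [show (0 : ℕ∞) = ((0 : ℕ) : ℕ∞) by rfl, lt_order_iff']
    constructor
    · intro h; exact h 0 le_rfl
    · intro h i hi; simpa [Nat.le_zero.mp hi] using h
  have key1 : ∀ f : PowerSeries K, (1 : ℕ∞) < f.order ↔
      PowerSeries.coeff 0 f = 0 ∧ PowerSeries.coeff 1 f = 0 := by
    intro f
    rw [show (1 : ℕ∞) = ((1 : ℕ) : ℕ∞) by rfl, lt_order_iff']
    constructor
    · intro h; exact ⟨h 0 (by norm_num), h 1 le_rfl⟩
    · rintro ⟨h0, h1⟩ i hi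
      interval_cases i <;> assumption
  refine ⟨⟨?_, ?_⟩, ?_, ?_, ?_⟩
  · rw [PowerSeries.order_eq_top.mpr rfl]; exact lt_top_iff_ne_top.mpr (by simp)
  · rw [PowerSeries.order_eq_top.mpr rfl]; exact lt_top_iff_ne_top.mpr (by simp)
  · rintro p q ⟨hp1, hp2⟩ ⟨hq1, hq2⟩
    rw [key] at hp1 hq1 ⊢
    rw [key1] at hp2 hq2 ⊢
    simp_all
  · rintro α p ⟨hp1, hp2⟩
    rw [key] at hp1 ⊢
    rw [key1] at hp2 ⊢
    simp_all [Prod.smul_fst, Prod.smul_snd]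
  · rintro p q hp0 ⟨hq1, hq2⟩
    rw [key] at hq1
    rw [key1] at hq2
    refine ⟨⟨?_, ?_⟩, ⟨?_, ?_⟩⟩
    · rw [key, rmul]
      have h1 : PowerSeries.constantCoeff q.1 = 0 := by
        rw [← PowerSeries.coeff_zero_eq_constantCoeff_apply]; exact hq1
      simp [PowerSeries.coeff_zero_eq_constantCoeff, map_mul, h1]
    · rw [key1, rmul]
      simp only [coeff_zero_pscomp, coeff_one_pscomp]
      constructor
      · simpa [PowerSeries.coeff_zero_eq_constantCoeff] using hp0
      · simp [hq2.2]
    · rw [key, rmul]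
      have h1 : PowerSeries.constantCoeff (pscomp q.1 p.2) = 0 := by
        rw [← PowerSeries.coeff_zero_eq_constantCoeff_apply, coeff_zero_pscomp]; exact hq1
      simp [PowerSeries.coeff_zero_eq_constantCoeff, map_mul, h1]
    · rw [key1, rmul]
      simp [coeff_zero_pscomp, coeff_one_pscomp, hq2.1, hq2.2]
end
end

section
/- Let K be a field of characteristic zero with the discrete topology, equip K[[x]] × 𝔐 with the product topology, and let (μ₊, σ₊) satisfy ν(μ₊) > 0 and ν(σ₊) > 1. Then for every formal power series f = ∑_{n≥0} f_n x^n ∈ K[[x]], the family (f_n · (μ₊,σ₊)^{⋊n})_{n∈ℕ} is summable in K[[x]] × 𝔐; that is, every formal power series operates on the ideal K[[x]]⁺ × 𝔐⁺ of the Riordan near algebra. -/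
/-!
Common setting: `K[[x]]` is `PowerSeries K` for a field `K` of characteristic zero.
`PowerSeries.order` (valued in `ℕ∞ = WithTop ℕ`) is the order/valuation `ν`; note that
multiplication and powers on `ℕ∞` obey exactly the conventions of the paper
(`⊤ * n = ⊤` for `n ≠ 0`, `⊤ * 0 = 0`, `⊤ ^ n = ⊤` for `n ≥ 1`, `m ^ 0 = 1`).
-/

noncomputable section

section aux

variable {K : Type*} [Field K]

/-- All coefficients below `m` vanish. -/
def Qlow (g : PowerSeries K) (m : ℕ) : Prop := ∀ k < m, PowerSeries.coeff k g = 0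

lemma Qlow_mono {g : PowerSeries K} {m m' : ℕ} (h : m' ≤ m) (hg : Qlow g m) : Qlow g m' :=
  fun k hk => hg k (lt_of_lt_of_le hk h)

lemma Qlow_mul {a b : PowerSeries K} {p q : ℕ} (ha : Qlow a p) (hb : Qlow b q) :
    Qlow (a * b) (p + q) := by
  intro k hk
  rw [PowerSeries.coeff_mul]
  apply Finset.sum_eq_zero
  rintro ⟨i, j⟩ hij
  replace hij : i + j = k := by simpa using hij
  rcases lt_or_ge i p with h | h
  · rw [ha i h, zero_mul]
  · rw [hb j (by omega), mul_zero]

lemma Qlow_pow {σ : PowerSeries K} (hσ : Qlow σ 2) (n : ℕ) : Qlow (σ ^ n) (2 * n) := by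
  induction n with
  | zero => intro k hk; exact absurd hk (by omega)
  | succ n ih =>
    have h := Qlow_mul ih hσ
    rw [← pow_succ] at h
    exact Qlow_mono (by omega) h

lemma Qlow_pscomp {g σ : PowerSeries K} {m : ℕ} (hg : Qlow g m) (hσ : Qlow σ 2) :
    Qlow (pscomp g σ) (2 * m) := by
  intro k hk
  rw [pscomp, PowerSeries.coeff_mk]
  apply Finset.sum_eq_zero
  intro n hn
  rcases lt_or_ge n m with h | h
  · rw [hg n h, zero_mul]
  · rw [Qlow_pow hσ n k (by omega), mul_zero]

lemma Qlow_rpow {μ σ : PowerSeries K} (hμ : Qlow μ 1) (hσ : Qlow σ 2) (n : ℕ) :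
    Qlow (rpow (μ, σ) n).1 n ∧ Qlow (rpow (μ, σ) n).2 (n + 1) := by
  induction n with
  | zero =>
    refine ⟨fun k hk => absurd hk (by omega), fun k hk => ?_⟩
    interval_cases k
    simp [rpow, PowerSeries.coeff_X]
  | succ n ih =>
    refine ⟨?_, ?_⟩
    · exact Qlow_mono (by omega) (Qlow_mul (Qlow_pscomp ih.1 hσ) hμ)
    · exact Qlow_mono (by omega) (Qlow_pscomp ih.2 hσ)

lemma apply_eq_coeff (h : PowerSeries K) (d : Unit →₀ ℕ) :
    h d = PowerSeries.coeff (d ()) h := by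
  have hd : d = Finsupp.single () (d ()) := Finsupp.unique_single d
  conv_lhs => rw [hd]
  rfl

/-- Key convergence lemma: if `coeff k (a n) = 0` whenever `k < n`, then the partial
sums of `a` converge coefficientwise to the series whose `k`-th coefficient is the
(finite) sum `∑_{n ≤ k} coeff k (a n)`. -/
lemma sum_tendsto (a : ℕ → PowerSeries K)
    (hz : ∀ n k : ℕ, k < n → PowerSeries.coeff k (a n) = 0) :
    letI : TopologicalSpace (PowerSeries K) := psTop K
    Filter.Tendsto (fun s : Finset ℕ => ∑ n ∈ s, a n) Filter.atTop
      (nhds (PowerSeries.mk fun k =>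
        ∑ n ∈ Finset.range (k + 1), PowerSeries.coeff k (a n))) := by
  letI : TopologicalSpace (PowerSeries K) := psTop K
  letI tK : TopologicalSpace K := ⊥
  haveI : DiscreteTopology K := ⟨rfl⟩
  set L : PowerSeries K := PowerSeries.mk fun k =>
    ∑ n ∈ Finset.range (k + 1), PowerSeries.coeff k (a n) with hL
  have : Filter.Tendsto (fun (s : Finset ℕ) (d : Unit →₀ ℕ) => (∑ n ∈ s, a n) d)
      Filter.atTop (nhds (L : (Unit →₀ ℕ) → K)) := by
    apply tendsto_pi_nhds.mpr
    intro d
    rw [show (nhds (L d) : Filter K) = pure (L d) from congrFun (nhds_discrete K) _,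
      Filter.tendsto_pure]
    filter_upwards [Filter.eventually_ge_atTop (Finset.range (d () + 1))] with s hs
    rw [apply_eq_coeff (∑ n ∈ s, a n) d, apply_eq_coeff L d, map_sum, hL, PowerSeries.coeff_mk]
    refine (Finset.sum_subset hs ?_).symm
    intro n hns hn
    simp only [Finset.mem_range, not_lt] at hn
    exact hz n (d ()) (by omega)
  exact this

end aux

/-- every formal power series operates on the ideal `K[[x]]⁺ × 𝔐⁺`:
for `ν(μ₊) > 0`, `ν(σ₊) > 1` and every `f = ∑ f_n x^n`, the family
`(f_n • (μ₊,σ₊)^{⋊n})` is summable in `K[[x]] × 𝔐` with the product topology. -/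
theorem stmt_12 {K : Type*} [Field K] [CharZero K] (μp σp : PowerSeries K)
    (hμ : 0 < μp.order) (hσ : 1 < σp.order) (f : PowerSeries K) :
    letI : TopologicalSpace (PowerSeries K) := psTop K
    Summable (fun n : ℕ => PowerSeries.coeff n f • rpow (μp, σp) n) := by
  letI : TopologicalSpace (PowerSeries K) := psTop K
  have hμQ : Qlow μp 1 := by
    intro k hk
    interval_cases k
    exact PowerSeries.coeff_of_lt_order 0 (by simpa using hμ)
  have hσQ : Qlow σp 2 := by
    intro k hk
    apply PowerSeries.coeff_of_lt_order
    calc (k : ℕ∞) ≤ 1 := by exact_mod_cast Nat.lt_succ_iff.mp hk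
    _ < σp.order := hσ
  set g : ℕ → PowerSeries K × PowerSeries K :=
    fun n => PowerSeries.coeff n f • rpow (μp, σp) n with hgdef
  have hQ := Qlow_rpow hμQ hσQ
  have hz1 : ∀ n k : ℕ, k < n → PowerSeries.coeff k (g n).1 = 0 := by
    intro n k hk
    have h : (g n).1 = PowerSeries.coeff n f • (rpow (μp, σp) n).1 := rfl
    rw [h, map_smul, smul_eq_mul, (hQ n).1 k hk, mul_zero]
  have hz2 : ∀ n k : ℕ, k < n → PowerSeries.coeff k (g n).2 = 0 := by
    intro n k hk
    have h : (g n).2 = PowerSeries.coeff n f • (rpow (μp, σp) n).2 := rfl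
    rw [h, map_smul, smul_eq_mul, (hQ n).2 k (by omega), mul_zero]
  refine ⟨(PowerSeries.mk fun k => ∑ n ∈ Finset.range (k + 1),
            PowerSeries.coeff k (g n).1,
          PowerSeries.mk fun k => ∑ n ∈ Finset.range (k + 1),
            PowerSeries.coeff k (g n).2), ?_⟩
  have h1 : Filter.Tendsto (fun s : Finset ℕ => ∑ n ∈ s, (g n).1) Filter.atTop
      (nhds (PowerSeries.mk fun k => ∑ n ∈ Finset.range (k + 1),
        PowerSeries.coeff k (g n).1)) := sum_tendsto _ hz1
  have h2 : Filter.Tendsto (fun s : Finset ℕ => ∑ n ∈ s, (g n).2) Filter.atTop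
      (nhds (PowerSeries.mk fun k => ∑ n ∈ Finset.range (k + 1),
        PowerSeries.coeff k (g n).2)) := sum_tendsto _ hz2
  have heq : (fun s : Finset ℕ => ∑ n ∈ s, g n) =
      fun s : Finset ℕ => (∑ n ∈ s, (g n).1, ∑ n ∈ s, (g n).2) := by
    funext s
    exact Prod.ext Prod.fst_sum Prod.snd_sum
  rw [HasSum, heq]
  exact h1.prodMk_nhds h2
end
end

section
/- Let K be a field of characteristic zero with the discrete topology, equip K[[x]] × 𝔐 with the product topology of the coefficientwise topologies, and let (μ₊, σ₊) satisfy ν(μ₊) > 0 and ν(σ₊) > 1. Then (μ₊, σ₊) is topologically nilpotent in the Riordan near algebra: the sequence of ⋊-powers (μ₊,σ₊)^{⋊n} converges to (0,0) as n → ∞. -/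
/-!
Common setting: `K[[x]]` is `PowerSeries K` for a field `K` of characteristic zero.
`PowerSeries.order` (valued in `ℕ∞ = WithTop ℕ`) is the order/valuation `ν`; note that
multiplication and powers on `ℕ∞` obey exactly the conventions of the paper
(`⊤ * n = ⊤` for `n ≠ 0`, `⊤ * 0 = 0`, `⊤ ^ n = ⊤` for `n ≥ 1`, `m ^ 0 = 1`).
-/

noncomputable section

open PowerSeries in
lemma pow_order_le {K : Type*} [Field K] (σ : PowerSeries K) (n : ℕ) :
    (n : ℕ∞) * σ.order ≤ (σ ^ n).order := by
  induction n with
  | zero => simp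
  | succ n ih =>
    have := PowerSeries.le_order_mul (σ ^ n) σ
    rw [pow_succ]
    push_cast
    calc ((n : ℕ∞) + 1) * σ.order = (n : ℕ∞) * σ.order + σ.order := by ring
    _ ≤ (σ ^ n).order + σ.order := by gcongr
    _ ≤ _ := this

lemma pscomp_order {K : Type*} [Field K] (f σ : PowerSeries K) (a : ℕ)
    (hf : (a : ℕ∞) ≤ f.order) (hσ : 2 ≤ σ.order) :
    ((2 * a : ℕ) : ℕ∞) ≤ (pscomp f σ).order := by
  apply PowerSeries.le_order
  intro k hk
  rw [pscomp, PowerSeries.coeff_mk]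
  apply Finset.sum_eq_zero
  intro n _
  by_cases hn : n < a
  · rw [PowerSeries.coeff_of_lt_order n (lt_of_lt_of_le (by exact_mod_cast hn) hf), zero_mul]
  · push_neg at hn
    rw [PowerSeries.coeff_of_lt_order k ?_, mul_zero]
    calc (k : ℕ∞) < ((2 * a : ℕ) : ℕ∞) := hk
    _ ≤ (n : ℕ∞) * 2 := by
        push_cast
        rw [mul_comm]
        gcongr ?_ * 2
        exact_mod_cast hn
    _ ≤ (n : ℕ∞) * σ.order := by gcongr
    _ ≤ (σ ^ n).order := pow_order_le σ n

lemma rpow_order {K : Type*} [Field K] (μp σp : PowerSeries K)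
    (hμ : 0 < μp.order) (hσ : 1 < σp.order) (n : ℕ) :
    (n : ℕ∞) ≤ (rpow (μp, σp) n).1.order ∧ ((n + 1 : ℕ) : ℕ∞) ≤ (rpow (μp, σp) n).2.order := by
  have hμ1 : 1 ≤ μp.order := Order.one_le_iff_pos.mpr hμ
  have hσ2 : 2 ≤ σp.order := by
    have := Order.add_one_le_of_lt hσ
    rw [one_add_one_eq_two] at this; exact this
  induction n with
  | zero => simp [rpow]
  | succ n ih =>
    obtain ⟨ih1, ih2⟩ := ih
    constructor
    · have h1 := pscomp_order (rpow (μp, σp) n).1 σp n ih1 hσ2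
      have h2 := PowerSeries.le_order_mul (pscomp (rpow (μp, σp) n).1 σp) μp
      show ((n + 1 : ℕ) : ℕ∞) ≤ (pscomp (rpow (μp, σp) n).1 σp * μp).order
      calc ((n + 1 : ℕ) : ℕ∞) ≤ ((2 * n : ℕ) : ℕ∞) + 1 := by
            rw [show ((2 * n : ℕ) : ℕ∞) + 1 = ((2 * n + 1 : ℕ) : ℕ∞) by push_cast; ring]
            exact_mod_cast Nat.succ_le_succ (by omega)
      _ ≤ (pscomp (rpow (μp, σp) n).1 σp).order + μp.order := by gcongr
      _ ≤ _ := h2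
    · have h1 := pscomp_order (rpow (μp, σp) n).2 σp (n + 1) ih2 hσ2
      show ((n + 2 : ℕ) : ℕ∞) ≤ (pscomp (rpow (μp, σp) n).2 σp).order
      refine le_trans ?_ h1
      exact_mod_cast (by omega : n + 2 ≤ 2 * (n + 1))

/-- any `(μ₊,σ₊)` with `ν(μ₊) > 0` and `ν(σ₊) > 1` is topologically
nilpotent in the Riordan near algebra: `(μ₊,σ₊)^{⋊n} → (0,0)` as `n → ∞`. -/
theorem stmt_13 {K : Type*} [Field K] [CharZero K] (μp σp : PowerSeries K)
    (hμ : 0 < μp.order) (hσ : 1 < σp.order) :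
    letI : TopologicalSpace (PowerSeries K) := psTop K
    Filter.Tendsto (fun n : ℕ => rpow (μp, σp) n) Filter.atTop
      (nhds ((0 : PowerSeries K), (0 : PowerSeries K))) := by
  letI : TopologicalSpace (PowerSeries K) := psTop K
  letI : TopologicalSpace K := ⊥
  haveI : DiscreteTopology K := ⟨rfl⟩
  have key := rpow_order μp σp hμ hσ
  have comp : ∀ (g : PowerSeries K × PowerSeries K → PowerSeries K),
      (∀ n m : ℕ, n < m → PowerSeries.coeff n (g (rpow (μp, σp) m)) = 0) →
      @Filter.Tendsto ℕ (PowerSeries K) (fun n => g (rpow (μp, σp) n)) Filter.atTop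
        (@nhds _ (psTop K) 0) := by
    intro g hg
    rw [show psTop K = @Pi.topologicalSpace (Unit →₀ ℕ) (fun _ => K) (fun _ => ⊥) from rfl]
    show @Filter.Tendsto ℕ ((Unit →₀ ℕ) → K) (fun n => g (rpow (μp, σp) n)) Filter.atTop (@nhds _ Pi.topologicalSpace 0)
    refine tendsto_pi_nhds.mpr ?_
    intro d
    rw [nhds_discrete, Filter.tendsto_pure]
    filter_upwards [Filter.eventually_gt_atTop (d ())] with m hm
    have := hg (d ()) m hm
    rw [PowerSeries.coeff, MvPowerSeries.coeff_apply] at this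
    rwa [show d = Finsupp.single () (d ()) from (Finsupp.unique_single d)] 
  rw [nhds_prod_eq, Filter.tendsto_prod_iff']
  constructor
  · exact comp Prod.fst (fun n m h => PowerSeries.coeff_of_lt_order n
      (lt_of_lt_of_le (by exact_mod_cast h) (key m).1))
  · exact comp Prod.snd (fun n m h => PowerSeries.coeff_of_lt_order n
      (lt_of_lt_of_le (by exact_mod_cast Nat.lt_succ_of_lt h) (key m).2))
end
end

section
/- Let K be a field of characteristic zero, let (μ₊, σ₊) satisfy ν(μ₊) > 0 and ν(σ₊) > 1, and let λ ∈ K. Then the binomial family (C(λ,n) · (μ₊,σ₊)^{⋊n})_{n∈ℕ}, where C(λ,n) := λ(λ-1)⋯(λ-n+1)/n! is the generalized binomial coefficient, is summable in K[[x]] × 𝔐 with the product topology, and its sum (A, B) belongs to the Riordan group UM × US, i.e. the constant term of A equals 1 and B - x has order strictly greater than 1. -/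
/-!
Common setting: `K[[x]]` is `PowerSeries K` for a field `K` of characteristic zero.
`PowerSeries.order` (valued in `ℕ∞ = WithTop ℕ`) is the order/valuation `ν`; note that
multiplication and powers on `ℕ∞` obey exactly the conventions of the paper
(`⊤ * n = ⊤` for `n ≠ 0`, `⊤ * 0 = 0`, `⊤ ^ n = ⊤` for `n ≥ 1`, `m ^ 0 = 1`).
-/

noncomputable section

/-- The generalized binomial coefficient `C(λ,n) = λ(λ-1)⋯(λ-n+1)/n!`. -/
def gchoose {K : Type*} [Field K] (lam : K) (n : ℕ) : K :=
  (∏ k ∈ Finset.range n, (lam - (k : K))) / (n.factorial : K)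

section Aux
open PowerSeries Finset

variable {K : Type*} [Field K]

def ordGe (f : PowerSeries K) (m : ℕ) : Prop := ∀ j < m, PowerSeries.coeff j f = 0

lemma ordGe_mono {f : PowerSeries K} {m m' : ℕ} (h : ordGe f m) (hle : m' ≤ m) : ordGe f m' :=
  fun j hj => h j (lt_of_lt_of_le hj hle)

lemma ordGe_mul {f g : PowerSeries K} {a b : ℕ} (hf : ordGe f a) (hg : ordGe g b) :
    ordGe (f * g) (a + b) := by
  intro j hj
  rw [PowerSeries.coeff_mul]
  apply Finset.sum_eq_zero
  intro p hp
  rw [Finset.HasAntidiagonal.mem_antidiagonal] at hp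
  rcases lt_or_ge p.1 a with h1 | h1
  · rw [hf p.1 h1, zero_mul]
  · rw [hg p.2 (by omega), mul_zero]

lemma ordGe_pow {σ : PowerSeries K} {a : ℕ} (hσ : ordGe σ a) (n : ℕ) :
    ordGe (σ ^ n) (n * a) := by
  induction n with
  | zero => exact fun j hj => absurd hj (by omega)
  | succ n ih =>
      have := ordGe_mul ih hσ
      rw [pow_succ]
      exact ordGe_mono this (by ring_nf; omega)

lemma ordGe_comp {f σ : PowerSeries K} {a : ℕ} (hf : ordGe f a) (hσ : ordGe σ 2) :
    ordGe (pscomp f σ) (2 * a) := by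
  intro j hj
  rw [pscomp, PowerSeries.coeff_mk]
  apply Finset.sum_eq_zero
  intro n _
  rcases lt_or_ge n a with h1 | h1
  · rw [hf n h1, zero_mul]
  · rw [ordGe_pow hσ n j (by omega), mul_zero]

lemma ordGe_smul {f : PowerSeries K} {m : ℕ} (c : K) (h : ordGe f m) : ordGe (c • f) m := by
  intro j hj
  rw [PowerSeries.coeff_smul, h j hj, smul_zero]

lemma rpow_ordGe (μp σp : PowerSeries K) (hμ : ordGe μp 1) (hσ : ordGe σp 2) (n : ℕ) :
    ordGe (rpow (μp, σp) n).1 n ∧ ordGe (rpow (μp, σp) n).2 (n + 1) := by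
  induction n with
  | zero =>
      constructor
      · exact fun j hj => absurd hj (by omega)
      · intro j hj
        interval_cases j
        simp [rpow]
  | succ n ih =>
      constructor
      · have := ordGe_mul (ordGe_comp ih.1 hσ) hμ
        exact ordGe_mono this (by omega)
      · have := ordGe_comp ih.2 hσ
        exact ordGe_mono this (by omega)

end Aux

/-- for `ν(μ₊) > 0`, `ν(σ₊) > 1` and `λ ∈ K`, the binomial family
`(C(λ,n) • (μ₊,σ₊)^{⋊n})` is summable in `K[[x]] × 𝔐` with the product topology, and
its sum `(A,B)` lies in the Riordan group `UM × US`: the constant term of `A` is `1`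
and `ν(B - x) > 1`. -/
theorem stmt_19 {K : Type*} [Field K] [CharZero K] (μp σp : PowerSeries K)
    (hμ : 0 < μp.order) (hσ : 1 < σp.order) (lam : K) :
    letI : TopologicalSpace (PowerSeries K) := psTop K
    Summable (fun n : ℕ => gchoose lam n • rpow (μp, σp) n) ∧
    PowerSeries.constantCoeff (∑' n : ℕ, gchoose lam n • rpow (μp, σp) n).1 = 1 ∧
    1 < ((∑' n : ℕ, gchoose lam n • rpow (μp, σp) n).2 - PowerSeries.X).order := by
  letI : TopologicalSpace K := ⊥
  haveI : DiscreteTopology K := ⟨rfl⟩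
  letI : TopologicalSpace (PowerSeries K) := psTop K
  haveI hT2 : T2Space (PowerSeries K) := inferInstanceAs (T2Space ((Unit →₀ ℕ) → K))
  have hμ' : ordGe μp 1 := by
    intro j hj; interval_cases j
    exact PowerSeries.coeff_of_lt_order 0 (by simpa using hμ)
  have hσ' : ordGe σp 2 := by
    intro j hj
    apply PowerSeries.coeff_of_lt_order
    interval_cases j
    · exact lt_trans (show ((0:ℕ):ℕ∞) < 1 by norm_num) hσ
    · simpa using hσ
  set f : ℕ → PowerSeries K × PowerSeries K := fun n => gchoose lam n • rpow (μp, σp) n with hf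
  have hordA : ∀ n, ordGe (f n).1 n := fun n =>
    ordGe_smul _ ((rpow_ordGe μp σp hμ' hσ' n).1)
  have hordB : ∀ n, ordGe (f n).2 (n + 1) := fun n =>
    ordGe_smul _ ((rpow_ordGe μp σp hμ' hσ' n).2)
  set A : PowerSeries K :=
    PowerSeries.mk fun k => ∑ n ∈ Finset.range (k + 1), PowerSeries.coeff k (f n).1 with hA
  set B : PowerSeries K :=
    PowerSeries.mk fun k => ∑ n ∈ Finset.range (k + 1), PowerSeries.coeff k (f n).2 with hB
  have hsum : HasSum f (A, B) := by
    have h1 : HasSum (fun n => (f n).1) A := by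
      refine Pi.hasSum.mpr fun d => ?_
      obtain ⟨k, rfl⟩ : ∃ k, d = Finsupp.single () k := ⟨d (), by ext; simp⟩
      show HasSum (fun n => PowerSeries.coeff k ((f n).1)) (PowerSeries.coeff k A)
      rw [hA, PowerSeries.coeff_mk]
      exact hasSum_sum_of_ne_finset_zero fun n hn => hordA n k (by simpa using hn)
    have h2 : HasSum (fun n => (f n).2) B := by
      refine Pi.hasSum.mpr fun d => ?_
      obtain ⟨k, rfl⟩ : ∃ k, d = Finsupp.single () k := ⟨d (), by ext; simp⟩
      show HasSum (fun n => PowerSeries.coeff k ((f n).2)) (PowerSeries.coeff k B)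
      rw [hB, PowerSeries.coeff_mk]
      exact hasSum_sum_of_ne_finset_zero fun n hn =>
        hordB n k (by simp at hn; omega)
    exact h1.prodMk h2
  have ht : (∑' n, f n) = (A, B) := hsum.tsum_eq
  refine ⟨⟨_, hsum⟩, ?_, ?_⟩
  · rw [ht]
    show PowerSeries.constantCoeff A = 1
    rw [← PowerSeries.coeff_zero_eq_constantCoeff_apply, hA, PowerSeries.coeff_mk]
    simp [hf, rpow, gchoose, Finset.sum_range_one]
  · rw [ht]
    show (1 : ℕ∞) < (B - PowerSeries.X).order
    refine lt_of_lt_of_le ?_ (PowerSeries.nat_le_order _ 2 ?_)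
    · norm_cast
    · intro i hi
      rw [map_sub]
      interval_cases i
      · rw [hB, PowerSeries.coeff_mk]
        simp [hf, rpow, Finset.sum_range_one]
      · rw [hB, PowerSeries.coeff_mk, Finset.sum_range_succ, Finset.sum_range_one,
          hordB 1 1 (by omega)]
        simp [hf, rpow, gchoose]
end
end
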